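/- Let T ≥ 1, I a finite index set, f_i : ℝ^T → ℝ for i ∈ I, and g : ℝ^T → ℝ convex and differentiable. Let x*_i ∈ ℝ^T for i ∈ I, set s* = Σ_i x*_i and p* = ∇g(s*), and suppose each x*_i is the unique minimizer of y ↦ f_i(y) + ⟨p*, y⟩ in the strict sense: f_i(x*_i) + ⟨p*, x*_i⟩ < f_i(y) + ⟨p*, y⟩ for every y ≠ x*_i. Then for every choice x̂_i ∈ ℝ^T (i ∈ I), Σ_i f_i(x*_i) + g(s*) ≤ Σ_i f_i(x̂_i) + g(Σ_i x̂_i). -/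

import Mathlib

open Finset RealInnerProductSpace

lemma convex_gradient_ineq {n : ℕ} (g : EuclideanSpace ℝ (Fin n) → ℝ)
    (hgconv : ConvexOn ℝ Set.univ g) (hgdiff : Differentiable ℝ g)
    (x y : EuclideanSpace ℝ (Fin n)) :
    g x + ⟪gradient g x, y - x⟫ ≤ g y := by
  set φ : ℝ → ℝ := fun t => g (AffineMap.lineMap x y t) with hφ
  have hφconv : ConvexOn ℝ Set.univ φ := by
    have := hgconv.comp_affineMap (AffineMap.lineMap x y : ℝ →ᵃ[ℝ] EuclideanSpace ℝ (Fin n))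
    rw [Set.preimage_univ] at this; exact this
  have hline : ∀ t : ℝ, (AffineMap.lineMap x y t : EuclideanSpace ℝ (Fin n))
      = x + t • (y - x) := by
    intro t; simp [AffineMap.lineMap_apply]; module
  have hc : HasDerivAt (fun t : ℝ => x + t • (y - x)) (y - x) 0 := by
    simpa using ((hasDerivAt_id (0:ℝ)).smul_const (y - x)).const_add x
  have hgrad : HasGradientAt g (gradient g x) x := (hgdiff x).hasGradientAt
  have hF : HasFDerivAt g (InnerProductSpace.toDual ℝ _ (gradient g x)) x :=
    hgrad.hasFDerivAt
  have hφ0 : HasDerivAt φ ⟪gradient g x, y - x⟫ 0 := by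
    have hF' : HasFDerivAt g (InnerProductSpace.toDual ℝ _ (gradient g x))
        ((fun t : ℝ => x + t • (y - x)) 0) := by simpa using hF
    have h2 : HasDerivAt (fun t : ℝ => g (x + t • (y - x)))
        ((InnerProductSpace.toDual ℝ _ (gradient g x)) (y - x)) 0 :=
      hF'.comp_hasDerivAt 0 hc
    have h3 : φ = fun t : ℝ => g (x + t • (y - x)) := by
      funext t; simp only [hφ]; rw [hline t]
    rw [h3]
    simpa [InnerProductSpace.toDual_apply_apply] using h2
  have hs := hφconv.le_slope_of_hasDerivAt (x := (0:ℝ)) (y := (1:ℝ))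
    (Set.mem_univ _) (Set.mem_univ _) one_pos hφ0
  have hslope : slope φ 0 1 = φ 1 - φ 0 := by simp [slope_def_field]
  rw [hslope] at hs
  have h0 : φ 0 = g x := by simp [hφ]
  have h1 : φ 1 = g y := by simp [hφ]
  rw [h0, h1] at hs
  linarith

theorem equilibrium_price_induces_social_optimum_multi
    (T : ℕ) (hT : 1 ≤ T)
    (I : Type*) [Fintype I]
    (f : I → EuclideanSpace ℝ (Fin T) → ℝ) (g : EuclideanSpace ℝ (Fin T) → ℝ)
    (hgconv : ConvexOn ℝ Set.univ g) (hgdiff : Differentiable ℝ g)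
    (xstar : I → EuclideanSpace ℝ (Fin T)) (sstar pstar : EuclideanSpace ℝ (Fin T))
    (hs : sstar = ∑ i, xstar i) (hp : pstar = gradient g sstar)
    (hmin : ∀ i : I, ∀ y : EuclideanSpace ℝ (Fin T), y ≠ xstar i →
      f i (xstar i) + ⟪pstar, xstar i⟫ < f i y + ⟪pstar, y⟫) :
    ∀ xhat : I → EuclideanSpace ℝ (Fin T),
      (∑ i, f i (xstar i)) + g sstar ≤ (∑ i, f i (xhat i)) + g (∑ i, xhat i) := by
  intro xhat
  have hle : ∀ i, f i (xstar i) + ⟪pstar, xstar i⟫ ≤ f i (xhat i) + ⟪pstar, xhat i⟫ := by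
    intro i
    by_cases h : xhat i = xstar i
    · rw [h]
    · exact (hmin i (xhat i) h).le
  have hsum : (∑ i, f i (xstar i)) + ⟪pstar, sstar⟫
      ≤ (∑ i, f i (xhat i)) + ⟪pstar, ∑ i, xhat i⟫ := by
    rw [hs, inner_sum, inner_sum, ← Finset.sum_add_distrib, ← Finset.sum_add_distrib]
    exact Finset.sum_le_sum fun i _ => hle i
  have hgrad := convex_gradient_ineq g hgconv hgdiff sstar (∑ i, xhat i)
  rw [← hp, inner_sub_right] at hgrad
  linarith
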